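/- Let p be a prime with p ≡ 1 (mod 5) and let k be an integer with 0 ≤ k ≤ 2(p-1)/5. Then there exist a_1, a_2, a_3, a_4 ∈ ℤ_p (depending only on k) such that for every t ∈ pℤ_p one has (2/5 + t)_k / (1 - t)_k ≡ ((2/5)_k / k!) · (1 + a_1 t + a_2 t^2 + a_3 t^3 + a_4 t^4) (mod p^5) in ℤ_p. -/
import Mathlib

open Finset

variable {p : ℕ} [Fact p.Prime]

private def Quart (g : ℤ_[p] → ℤ_[p]) (b₀ b₁ b₂ b₃ b₄ : ℤ_[p]) : Prop :=
  ∀ s : ℤ_[p], ∃ z : ℤ_[p],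
    g s = b₀ + b₁ * ((p : ℤ_[p]) * s) + b₂ * ((p : ℤ_[p]) * s) ^ 2
      + b₃ * ((p : ℤ_[p]) * s) ^ 3 + b₄ * ((p : ℤ_[p]) * s) ^ 4 + (p : ℤ_[p]) ^ 5 * z

private lemma quart_mul {g h : ℤ_[p] → ℤ_[p]} {b₀ b₁ b₂ b₃ b₄ c₀ c₁ c₂ c₃ c₄ : ℤ_[p]}
    (hg : Quart g b₀ b₁ b₂ b₃ b₄) (hh : Quart h c₀ c₁ c₂ c₃ c₄) :
    Quart (fun s => g s * h s) (b₀*c₀) (b₀*c₁+b₁*c₀) (b₀*c₂+b₁*c₁+b₂*c₀)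
      (b₀*c₃+b₁*c₂+b₂*c₁+b₃*c₀) (b₀*c₄+b₁*c₃+b₂*c₂+b₃*c₁+b₄*c₀) := by
  intro s
  obtain ⟨z₁, h₁⟩ := hg s
  obtain ⟨z₂, h₂⟩ := hh s
  refine ⟨s^5*((b₁*c₄+b₂*c₃+b₃*c₂+b₄*c₁) + (b₂*c₄+b₃*c₃+b₄*c₂)*((p:ℤ_[p])*s)
      + (b₃*c₄+b₄*c₃)*((p:ℤ_[p])*s)^2 + (b₄*c₄)*((p:ℤ_[p])*s)^3)
    + z₁*(c₀+c₁*((p:ℤ_[p])*s)+c₂*((p:ℤ_[p])*s)^2+c₃*((p:ℤ_[p])*s)^3+c₄*((p:ℤ_[p])*s)^4)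
    + z₂*(b₀+b₁*((p:ℤ_[p])*s)+b₂*((p:ℤ_[p])*s)^2+b₃*((p:ℤ_[p])*s)^3+b₄*((p:ℤ_[p])*s)^4)
    + (p:ℤ_[p])^5*z₁*z₂, ?_⟩
  simp only [h₁, h₂]
  ring

private lemma quart_prod (u : ℕ → ℤ_[p]) (e : ℤ_[p]) (k : ℕ) :
    ∃ b₁ b₂ b₃ b₄, Quart (fun s => ∏ j ∈ range k, (u j + e * ((p : ℤ_[p]) * s)))
      (∏ j ∈ range k, u j) b₁ b₂ b₃ b₄ := by
  induction k with
  | zero => exact ⟨0, 0, 0, 0, fun s => ⟨0, by simp⟩⟩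
  | succ k ih =>
    obtain ⟨b₁, b₂, b₃, b₄, hb⟩ := ih
    have hlin : Quart (fun s => u k + e * ((p : ℤ_[p]) * s)) (u k) e 0 0 0 :=
      fun s => ⟨0, by ring⟩
    have h2 := quart_mul hb hlin
    refine ⟨(∏ j ∈ range k, u j)*e + b₁*u k, b₁*e + b₂*u k, b₂*e + b₃*u k, b₃*e + b₄*u k, ?_⟩
    intro s
    obtain ⟨z, hz⟩ := h2 s
    refine ⟨z, ?_⟩
    simp only [prod_range_succ] at hz ⊢
    linear_combination hz

private lemma padic_coe_prod (f : ℕ → ℤ_[p]) (s : Finset ℕ) :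
    ((∏ j ∈ s, f j : ℤ_[p]) : ℚ_[p]) = ∏ j ∈ s, (f j : ℚ_[p]) :=
  map_prod PadicInt.Coe.ringHom f s

/-- Rising factorial (Pochhammer symbol) `(a)_k = a(a+1)⋯(a+k-1)` in `ℚ_p`. -/
noncomputable def rf {p : ℕ} [Fact p.Prime] (a : ℚ_[p]) (k : ℕ) : ℚ_[p] :=
  ∏ j ∈ Finset.range k, (a + (j : ℚ_[p]))

set_option maxHeartbeats 1000000 in
/-- For a prime `p ≡ 1 (mod 5)` and `0 ≤ k ≤ 2(p-1)/5`, there exist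
`a₁, a₂, a₃, a₄ ∈ ℤ_p` (depending only on `k`) such that for every `t ∈ pℤ_p`,
`(2/5 + t)_k / (1 - t)_k ≡ ((2/5)_k / k!) · (1 + a₁ t + a₂ t² + a₃ t³ + a₄ t⁴) (mod p^5)`
in `ℤ_p`. -/
theorem stmt3 (p : ℕ) [Fact p.Prime] (hp : p % 5 = 1) (k : ℕ) (hk : k ≤ 2 * (p - 1) / 5) :
    ∃ a₁ a₂ a₃ a₄ : ℤ_[p], ∀ t : ℚ_[p], (∃ s : ℤ_[p], t = (p : ℚ_[p]) * s) →
      ∃ z : ℤ_[p],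
        rf ((2 : ℚ_[p]) / 5 + t) k / rf (1 - t) k
          - (rf ((2 : ℚ_[p]) / 5) k / (k.factorial : ℚ_[p])) *
              (1 + (a₁ : ℚ_[p]) * t + (a₂ : ℚ_[p]) * t ^ 2 + (a₃ : ℚ_[p]) * t ^ 3
                + (a₄ : ℚ_[p]) * t ^ 4)
        = (p : ℚ_[p]) ^ 5 * (z : ℚ_[p]) := by
  have hpp : p.Prime := Fact.out
  have hp2 : 2 ≤ p := hpp.two_le
  have h5k : 5 * k ≤ 2 * (p - 1) := by
    have h1 := Nat.div_mul_le_self (2 * (p - 1)) 5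
    omega
  have hkp : k < p := by omega
  -- units from naturals
  have hunit : ∀ m : ℕ, ¬ p ∣ m → IsUnit (m : ℤ_[p]) := by
    intro m hm
    rw [PadicInt.isUnit_iff]
    have h1 : ‖(m : ℤ_[p])‖ ≤ 1 := PadicInt.norm_le_one _
    have h2 : ¬ ‖(m : ℤ_[p])‖ < 1 := by
      rw [show ((m : ℤ_[p])) = (((m : ℤ) : ℤ_[p])) by push_cast; ring,
        PadicInt.norm_int_lt_one_iff_dvd]
      exact fun h => hm (by exact_mod_cast h)
    linarith
  -- unit + p·x is a unit
  have hup : ∀ v x : ℤ_[p], IsUnit v → IsUnit (v + (p : ℤ_[p]) * x) := by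
    intro v x hv
    rw [PadicInt.isUnit_iff] at hv ⊢
    by_contra hne
    have h1 : ‖v + (p : ℤ_[p]) * x‖ < 1 :=
      lt_of_le_of_ne (PadicInt.norm_le_one _) hne
    have h3 : ‖(p : ℤ_[p]) * x‖ < 1 := by
      rw [norm_mul, PadicInt.norm_p]
      have hx := PadicInt.norm_le_one x
      have hppos : (0:ℝ) < p := by positivity
      have : ((p:ℝ))⁻¹ < 1 := by
        rw [inv_lt_one_iff₀]; right; exact_mod_cast hp2
      nlinarith [norm_nonneg x, (inv_nonneg.mpr (le_of_lt hppos) : (0:ℝ) ≤ (p:ℝ)⁻¹)]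
    have h4 : ‖v‖ < 1 := by
      have heq : v = (v + (p : ℤ_[p]) * x) + (-((p : ℤ_[p]) * x)) := by ring
      calc ‖v‖ = ‖(v + (p : ℤ_[p]) * x) + (-((p : ℤ_[p]) * x))‖ := by rw [← heq]
        _ ≤ max ‖v + (p : ℤ_[p]) * x‖ ‖-((p : ℤ_[p]) * x)‖ := PadicInt.nonarchimedean _ _
        _ < 1 := max_lt h1 (by rwa [norm_neg])
    rw [hv] at h4; exact lt_irrefl _ h4
  -- 5 is a unit; w = 2/5 in ℤ_p
  have h5 : ¬ p ∣ 5 := by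
    intro h
    have := (Nat.prime_dvd_prime_iff_eq hpp (by norm_num)).mp h
    omega
  obtain ⟨e5, he5⟩ := isUnit_iff_exists_inv.mp (hunit 5 h5)
  set w : ℤ_[p] := 2 * e5 with hw_def
  have hw : (5 : ℤ_[p]) * w = 2 := by rw [hw_def]; linear_combination 2 * he5
  -- numerator factors are units
  have hnum : ∀ j, j < k → IsUnit (w + (j : ℤ_[p])) := by
    intro j hj
    have hnd : ¬ p ∣ (2 + 5 * j) := by
      intro hd
      obtain ⟨m, hm⟩ := hd
      rcases Nat.lt_or_ge m 2 with hm2 | hm2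
      · interval_cases m <;> omega
      · have h2p : p * 2 ≤ p * m := Nat.mul_le_mul_left p hm2
        rw [← hm] at h2p
        omega
    have h2 : ((2 + 5 * j : ℕ) : ℤ_[p]) = 5 * (w + (j : ℤ_[p])) := by
      push_cast
      linear_combination -hw
    have h3 := hunit _ hnd
    rw [h2] at h3
    exact isUnit_of_mul_isUnit_right h3
  -- quart decompositions of numerator and denominator products
  obtain ⟨n₁, n₂, n₃, n₄, hN⟩ := quart_prod (fun j => w + (j : ℤ_[p])) 1 k
  obtain ⟨d₁, d₂, d₃, d₄, hD⟩ := quart_prod (fun j => 1 + (j : ℤ_[p])) (-1) k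
  set n₀ : ℤ_[p] := ∏ j ∈ range k, (w + (j : ℤ_[p])) with hn₀_def
  set d₀ : ℤ_[p] := ∏ j ∈ range k, (1 + (j : ℤ_[p])) with hd₀_def
  have hd₀f : d₀ = (k.factorial : ℤ_[p]) := by
    rw [hd₀_def, ← Finset.prod_range_add_one_eq_factorial]
    push_cast
    exact Finset.prod_congr rfl fun j _ => add_comm _ _
  have hkf : ¬ p ∣ k.factorial := by
    intro h
    exact absurd ((Nat.Prime.dvd_factorial hpp).mp h) (by omega)
  obtain ⟨ef, hef⟩ := isUnit_iff_exists_inv.mp (hunit _ hkf)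
  have hd₀e : d₀ * ef = 1 := by rw [hd₀f]; exact hef
  set C : ℤ_[p] := n₀ * ef with hC_def
  have hCd : C * d₀ = n₀ := by rw [hC_def]; linear_combination n₀ * hd₀e
  have hn₀u : IsUnit n₀ :=
    Finset.prod_induction _ IsUnit (fun a b ha hb => ha.mul hb) isUnit_one
      (fun j hj => hnum j (Finset.mem_range.mp hj))
  obtain ⟨n₀', hn'⟩ := isUnit_iff_exists_inv.mp hn₀u
  -- the coefficients
  set a₁ : ℤ_[p] := (n₁ - C*d₁) * n₀' with ha₁
  set a₂ : ℤ_[p] := (n₂ - C*d₂ - a₁*(C*d₁)) * n₀' with ha₂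
  set a₃ : ℤ_[p] := (n₃ - C*d₃ - a₁*(C*d₂) - a₂*(C*d₁)) * n₀' with ha₃
  set a₄ : ℤ_[p] := (n₄ - C*d₄ - a₁*(C*d₃) - a₂*(C*d₂) - a₃*(C*d₁)) * n₀' with ha₄
  have h1 : C*d₁ + a₁*(C*d₀) = n₁ := by
    rw [hCd, ha₁]; linear_combination (n₁ - C*d₁) * hn'
  have h2 : C*d₂ + a₁*(C*d₁) + a₂*(C*d₀) = n₂ := by
    rw [hCd, ha₂]; linear_combination (n₂ - C*d₂ - a₁*(C*d₁)) * hn'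
  have h3 : C*d₃ + a₁*(C*d₂) + a₂*(C*d₁) + a₃*(C*d₀) = n₃ := by
    rw [hCd, ha₃]; linear_combination (n₃ - C*d₃ - a₁*(C*d₂) - a₂*(C*d₁)) * hn'
  have h4 : C*d₄ + a₁*(C*d₃) + a₂*(C*d₂) + a₃*(C*d₁) + a₄*(C*d₀) = n₄ := by
    rw [hCd, ha₄]; linear_combination (n₄ - C*d₄ - a₁*(C*d₃) - a₂*(C*d₂) - a₃*(C*d₁)) * hn'
  -- the quartic multiplier
  have hCA : Quart (fun s => C * (1 + a₁*((p:ℤ_[p])*s) + a₂*((p:ℤ_[p])*s)^2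
      + a₃*((p:ℤ_[p])*s)^3 + a₄*((p:ℤ_[p])*s)^4)) C (C*a₁) (C*a₂) (C*a₃) (C*a₄) :=
    fun s => ⟨0, by ring⟩
  have hM := quart_mul hCA hD
  refine ⟨a₁, a₂, a₃, a₄, ?_⟩
  rintro t ⟨s, rfl⟩
  obtain ⟨zN, hzN⟩ := hN s
  obtain ⟨zM, hzM⟩ := hM s
  simp only at hzN hzM
  -- the key ℤ_p congruence
  have key : (∏ j ∈ range k, (w + (j:ℤ_[p]) + 1 * ((p:ℤ_[p])*s)))
      - (C * (1 + a₁*((p:ℤ_[p])*s) + a₂*((p:ℤ_[p])*s)^2 + a₃*((p:ℤ_[p])*s)^3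
          + a₄*((p:ℤ_[p])*s)^4))
        * (∏ j ∈ range k, (1 + (j:ℤ_[p]) + (-1) * ((p:ℤ_[p])*s)))
      = (p:ℤ_[p])^5 * (zN - zM) := by
    linear_combination hzN - hzM - hCd - ((p:ℤ_[p])*s) * h1 - ((p:ℤ_[p])*s)^2 * h2
      - ((p:ℤ_[p])*s)^3 * h3 - ((p:ℤ_[p])*s)^4 * h4
  -- name the ℤ_p elements
  set Np : ℤ_[p] := ∏ j ∈ range k, (w + (j:ℤ_[p]) + 1 * ((p:ℤ_[p])*s)) with hNp_def
  set Dp : ℤ_[p] := ∏ j ∈ range k, (1 + (j:ℤ_[p]) + (-1) * ((p:ℤ_[p])*s)) with hDp_def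
  set Ap : ℤ_[p] := 1 + a₁*((p:ℤ_[p])*s) + a₂*((p:ℤ_[p])*s)^2 + a₃*((p:ℤ_[p])*s)^3
      + a₄*((p:ℤ_[p])*s)^4 with hAp_def
  -- the denominator is a unit
  have hDu : IsUnit Dp := by
    rw [hDp_def]
    refine Finset.prod_induction _ IsUnit (fun a b ha hb => ha.mul hb) isUnit_one ?_
    intro j hj
    have hj' : j < k := Finset.mem_range.mp hj
    have hnd : ¬ p ∣ (1 + j) := by
      intro hdvd
      have := Nat.le_of_dvd (by omega) hdvd
      omega
    have h0 : IsUnit ((1:ℤ_[p]) + (j:ℤ_[p])) := by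
      have := hunit (1 + j) hnd
      rwa [show ((1 + j : ℕ) : ℤ_[p]) = 1 + (j:ℤ_[p]) by push_cast; ring] at this
    have := hup (1 + (j:ℤ_[p])) (-s) h0
    rwa [show (1 + (j:ℤ_[p]) + (p:ℤ_[p]) * (-s)) = (1 + (j:ℤ_[p]) + (-1) * ((p:ℤ_[p])*s))
      by ring] at this
  obtain ⟨Di, hDi⟩ := isUnit_iff_exists_inv.mp hDu
  refine ⟨(zN - zM) * Di, ?_⟩
  -- cast identities
  have hwQ : (w : ℚ_[p]) = 2 / 5 := by
    have hwn : w * ((5:ℕ):ℤ_[p]) = ((2:ℕ):ℤ_[p]) := by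
      rw [hw_def]; linear_combination 2 * he5
    have h5Q : (w:ℚ_[p]) * ((5:ℕ):ℚ_[p]) = ((2:ℕ):ℚ_[p]) := by
      rw [← PadicInt.coe_natCast (p := p) 5, ← PadicInt.coe_natCast (p := p) 2,
        ← PadicInt.coe_mul]
      exact congrArg (fun x : ℤ_[p] => (x:ℚ_[p])) hwn
    rw [eq_div_iff (by norm_num : (5:ℚ_[p]) ≠ 0)]
    linear_combination h5Q
  have hNQ : rf ((2:ℚ_[p])/5 + (p:ℚ_[p]) * (s:ℚ_[p])) k = (Np : ℚ_[p]) := by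
    rw [rf, hNp_def, padic_coe_prod]
    refine Finset.prod_congr rfl fun j _ => ?_
    push_cast [hwQ]
    ring
  have hDQ : rf (1 - (p:ℚ_[p]) * (s:ℚ_[p])) k = (Dp : ℚ_[p]) := by
    rw [rf, hDp_def, padic_coe_prod]
    refine Finset.prod_congr rfl fun j _ => ?_
    push_cast
    ring
  have hn₀Q : rf ((2:ℚ_[p])/5) k = (n₀ : ℚ_[p]) := by
    rw [rf, hn₀_def, padic_coe_prod]
    refine Finset.prod_congr rfl fun j _ => ?_
    push_cast [hwQ]
    ring
  have hCQ : rf ((2:ℚ_[p])/5) k / (k.factorial : ℚ_[p]) = (C : ℚ_[p]) := by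
    have hefQ : (k.factorial : ℚ_[p]) * (ef : ℚ_[p]) = 1 := by
      have := congrArg (fun x : ℤ_[p] => (x:ℚ_[p])) hef
      push_cast at this
      exact this
    have hkf0 : (k.factorial : ℚ_[p]) ≠ 0 := by
      exact_mod_cast Nat.cast_ne_zero.mpr k.factorial_pos.ne'
    rw [hn₀Q, hC_def, div_eq_iff hkf0]
    push_cast
    linear_combination -(n₀ : ℚ_[p]) * hefQ
  have hAQ : (1 + (a₁:ℚ_[p]) * ((p:ℚ_[p]) * (s:ℚ_[p])) + (a₂:ℚ_[p]) * ((p:ℚ_[p]) * (s:ℚ_[p]))^2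
      + (a₃:ℚ_[p]) * ((p:ℚ_[p]) * (s:ℚ_[p]))^3 + (a₄:ℚ_[p]) * ((p:ℚ_[p]) * (s:ℚ_[p]))^4)
      = (Ap : ℚ_[p]) := by
    rw [hAp_def]
    push_cast
    ring
  have hDiQ : (Dp:ℚ_[p]) * (Di:ℚ_[p]) = 1 := by
    have := congrArg (fun x : ℤ_[p] => (x:ℚ_[p])) hDi
    push_cast at this
    exact this
  have keyQ : (Np:ℚ_[p]) - (C:ℚ_[p]) * (Ap:ℚ_[p]) * (Dp:ℚ_[p])
      = (p:ℚ_[p])^5 * ((zN:ℚ_[p]) - (zM:ℚ_[p])) := by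
    have := congrArg (fun x : ℤ_[p] => (x:ℚ_[p])) key
    push_cast at this
    linear_combination this
  have hinv : ((Dp:ℚ_[p]))⁻¹ = (Di:ℚ_[p]) := inv_eq_of_mul_eq_one_right hDiQ
  rw [hNQ, hDQ, hCQ, hAQ, div_eq_mul_inv, hinv]
  push_cast
  linear_combination (Di:ℚ_[p]) * keyQ + (C:ℚ_[p]) * (Ap:ℚ_[p]) * hDiQ
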